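/- Let A = (a_{i,j}) be an n×n real matrix. Then the permanent of A equals (-1)^n · ∑_{S ⊆ {1,...,n}} (-1)^{|S|} ∏_{i=1}^n (∑_{j∈S} a_{i,j}). -/

import Mathlib

open Finset

/-- The permanent of an `n × n` real matrix. -/
def permanent {n : ℕ} (A : Matrix (Fin n) (Fin n) ℝ) : ℝ :=
  ∑ σ : Equiv.Perm (Fin n), ∏ i, A i (σ i)

lemma real_sum_powerset (α : Type*) [DecidableEq α] (x : Finset α) :
    (∑ m ∈ x.powerset, (-1 : ℝ) ^ m.card) = if x = ∅ then 1 else 0 := by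
  have h := @Finset.sum_powerset_neg_one_pow_card α _ x
  have : (∑ m ∈ x.powerset, (-1 : ℝ) ^ m.card) =
      ((∑ m ∈ x.powerset, (-1 : ℤ) ^ m.card : ℤ) : ℝ) := by push_cast; rfl
  rw [this, h]
  split <;> simp

lemma ryser_inner_sum (n : ℕ) (R : Finset (Fin n)) :
    ∑ S ∈ univ.filter (fun S => R ⊆ S), (-1 : ℝ) ^ S.card =
      if R = univ then (-1 : ℝ) ^ n else 0 := by
  have key : ∑ S ∈ univ.filter (fun S => R ⊆ S), (-1 : ℝ) ^ S.card =
      (-1 : ℝ) ^ R.card * ∑ T ∈ Rᶜ.powerset, (-1 : ℝ) ^ T.card := by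
    rw [Finset.mul_sum]
    refine Finset.sum_bij' (fun S _ => S \ R) (fun T _ => R ∪ T) ?_ ?_ ?_ ?_ ?_
    · intro S hS
      simp only [mem_filter, mem_univ, true_and] at hS
      simp only [mem_powerset]
      intro x hx
      simp only [mem_sdiff] at hx
      simp [hx.2]
    · intro T hT
      simp only [mem_filter, mem_univ, true_and]
      exact subset_union_left
    · intro S hS
      simp only [mem_filter, mem_univ, true_and] at hS
      exact Finset.union_sdiff_of_subset hS
    · intro T hT
      simp only [mem_powerset] at hT
      apply Finset.union_sdiff_cancel_left
      rw [Finset.disjoint_left]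
      intro x hx hxT
      have := hT hxT
      simp at this
      exact this hx
    · intro S hS
      simp only [mem_filter, mem_univ, true_and] at hS
      rw [← pow_add, Finset.card_sdiff_of_subset hS]
      have := Finset.card_le_card hS
      congr 1
      omega
  rw [key, real_sum_powerset]
  by_cases h : R = univ
  · have hc : Rᶜ = ∅ := by simp [h]
    simp [hc, h, Finset.card_univ]
  · have : Rᶜ ≠ ∅ := by
      intro hc
      exact h (by simpa [Finset.compl_eq_empty_iff] using hc)
    simp [this, h]

/-- **Ryser's formula.** `per(A) = (-1)^n ∑_{S ⊆ {1,…,n}} (-1)^{|S|} ∏ᵢ (∑_{j ∈ S} aᵢⱼ)`. -/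
theorem ryser_formula (n : ℕ) (A : Matrix (Fin n) (Fin n) ℝ) :
    permanent A =
      (-1 : ℝ) ^ n * ∑ S : Finset (Fin n), (-1 : ℝ) ^ S.card * ∏ i, ∑ j ∈ S, A i j := by
  have key : ∑ S : Finset (Fin n), (-1 : ℝ) ^ S.card * ∏ i, ∑ j ∈ S, A i j
      = (-1 : ℝ) ^ n * permanent A := by
    calc ∑ S : Finset (Fin n), (-1 : ℝ) ^ S.card * ∏ i, ∑ j ∈ S, A i j
        = ∑ S : Finset (Fin n), ∑ f ∈ Fintype.piFinset (fun _ : Fin n => S),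
            (-1 : ℝ) ^ S.card * ∏ i, A i (f i) := by
          refine Finset.sum_congr rfl fun S _ => ?_
          simp only [Finset.prod_univ_sum (f := fun i j => A i j), Finset.mul_sum]
      _ = ∑ S : Finset (Fin n), ∑ f : Fin n → Fin n,
            if image f univ ⊆ S then (-1 : ℝ) ^ S.card * ∏ i, A i (f i) else 0 := by
          refine Finset.sum_congr rfl fun S _ => ?_
          have hps : Fintype.piFinset (fun _ : Fin n => S)
              = univ.filter (fun f : Fin n → Fin n => image f univ ⊆ S) := by
            ext f
            simp [Fintype.mem_piFinset, Finset.image_subset_iff]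
          rw [hps, Finset.sum_filter]
      _ = ∑ f : Fin n → Fin n, ∑ S : Finset (Fin n),
            if image f univ ⊆ S then (-1 : ℝ) ^ S.card * ∏ i, A i (f i) else 0 := by
          rw [Finset.sum_comm]
      _ = ∑ f : Fin n → Fin n,
            (∑ S ∈ univ.filter (fun S => image f univ ⊆ S), (-1 : ℝ) ^ S.card)
              * ∏ i, A i (f i) := by
          refine Finset.sum_congr rfl fun f _ => ?_
          rw [Finset.sum_filter, Finset.sum_mul]
          exact Finset.sum_congr rfl fun S _ => by split <;> simp
      _ = ∑ f : Fin n → Fin n,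
            (if image f univ = univ then (-1 : ℝ) ^ n else 0) * ∏ i, A i (f i) := by
          refine Finset.sum_congr rfl fun f _ => ?_
          rw [ryser_inner_sum]
      _ = ∑ f ∈ univ.filter (fun f : Fin n → Fin n => Function.Bijective f),
            (-1 : ℝ) ^ n * ∏ i, A i (f i) := by
          rw [Finset.sum_filter]
          refine Finset.sum_congr rfl fun f _ => ?_
          have hiff : image f univ = univ ↔ Function.Bijective f := by
            constructor
            · intro h
              refine Finite.surjective_iff_bijective.mp fun y => ?_
              have : y ∈ image f univ := by rw [h]; exact mem_univ y
              simpa using this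
            · intro h
              apply Finset.eq_univ_of_forall
              intro y
              obtain ⟨x, hx⟩ := h.surjective y
              exact mem_image.mpr ⟨x, mem_univ x, hx⟩
          simp only [hiff]
          split <;> simp
      _ = (-1 : ℝ) ^ n * permanent A := by
          rw [← Finset.mul_sum, permanent]
          congr 1
          refine (Finset.sum_bij (fun (σ : Equiv.Perm (Fin n)) _ => (σ : Fin n → Fin n)) ?_ ?_ ?_ ?_).symm
          · intro σ _
            simp only [Finset.mem_filter, Finset.mem_univ, true_and]; exact σ.bijective
          · intro σ _ τ _ h
            exact Equiv.coe_fn_injective h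
          · intro f hf
            simp only [mem_filter, mem_univ, true_and] at hf
            exact ⟨Equiv.ofBijective f hf, mem_univ _, rfl⟩
          · intro σ _
            rfl
  rw [key, ← mul_assoc, ← pow_add, ← two_mul, pow_mul]
  norm_num
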